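/- Let d ≥ 1 and let i be an integer with 1 ≤ i ≤ (d² + d)/2, and let κ be the unique integer with 1 ≤ κ ≤ d and (κ−1)d − (κ−1)(κ−2)/2 < i ≤ κd − κ(κ−1)/2. Then the lex-smallest element of the degree-d lex segment of colength d + i in x₁, x₂, x₃ (equivalently, the (d+i+1)-th lex-smallest monomial of degree d) is x₁^κ · x₂^{i − (κ−1)d + (κ−1)(κ−2)/2 − 1} · x₃^{κd − κ(κ−1)/2 − i}. -/

import Mathlib

/-- Monomials `x₁^a x₂^b x₃^c` of degree `d` in three variables,
encoded as triples `(a, b, c)` with `a + b + c = d`. -/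
def MonDeg (d : ℕ) : Set (ℕ × ℕ × ℕ) := {m | m.1 + m.2.1 + m.2.2 = d}

/-- The lexicographic order on monomials with `x₁ > x₂ > x₃`:
`m < m'` iff `a < a'`, or `a = a'` and `b < b'`. -/
def LexLt (m m' : ℕ × ℕ × ℕ) : Prop :=
  m.1 < m'.1 ∨ (m.1 = m'.1 ∧ m.2.1 < m'.2.1)

/-- The number of degree-`d` monomials lex-smaller than `m`
(so `m` is the `(lexRank d m + 1)`-th lex-smallest degree-`d` monomial). -/
noncomputable def lexRank (d : ℕ) (m : ℕ × ℕ × ℕ) : ℕ :=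
  Set.ncard {m' | m' ∈ MonDeg d ∧ LexLt m' m}

/-- The degree-`d` lex segment of colength `h`:
all degree-`d` monomials except the `h` lex-smallest ones. -/
def LexSeg (d h : ℕ) : Set (ℕ × ℕ × ℕ) := {m | m ∈ MonDeg d ∧ h ≤ lexRank d m}

/-- Divisibility of monomials. -/
def MonDvd (m m' : ℕ × ℕ × ℕ) : Prop :=
  m.1 ≤ m'.1 ∧ m.2.1 ≤ m'.2.1 ∧ m.2.2 ≤ m'.2.2

/-- `m(T)`: the largest index `ℓ ∈ {1, 2, 3}` such that `x_ℓ` divides `T`. -/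
def maxVar (m : ℕ × ℕ × ℕ) : ℕ :=
  if 0 < m.2.2 then 3 else if 0 < m.2.1 then 2 else 1

lemma seg_finset (d a b c : ℕ) (h : a + b + c = d) :
    {m' | m' ∈ MonDeg d ∧ LexLt m' (a, b, c)} =
    ↑((Finset.range (a+1)).biUnion (fun a' =>
        (Finset.range (if a' = a then b else d + 1 - a')).image
          (fun b' => (a', b', d - a' - b')))) := by
  ext ⟨x, y, z⟩
  simp only [Set.mem_setOf_eq, Finset.coe_biUnion, Set.mem_iUnion, Finset.mem_coe,
    Finset.mem_biUnion, Finset.mem_image, Finset.mem_range, MonDeg, LexLt, Set.mem_setOf_eq]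
  constructor
  · rintro ⟨hm, hlt⟩
    refine ⟨x, by omega, y, ?_, by simp; omega⟩
    rcases hlt with h1 | ⟨h1, h2⟩
    · rw [if_neg (by omega)]; omega
    · rw [if_pos h1]; exact h2
  · rintro ⟨a', ha', b', hb', heq⟩
    obtain ⟨rfl, rfl, rfl⟩ : x = a' ∧ y = b' ∧ z = d - a' - b' := by
      have := heq.symm
      simpa [Prod.ext_iff] using this
    by_cases hxa : x = a
    · subst hxa; rw [if_pos rfl] at hb'
      constructor
      · omega
      · right; exact ⟨rfl, hb'⟩
    · rw [if_neg hxa] at hb'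
      exact ⟨by omega, Or.inl (by omega)⟩

lemma lexRank_eq (d a b c : ℕ) (h : a + b + c = d) :
    lexRank d (a, b, c) = b + ∑ j ∈ Finset.range a, (d + 1 - j) := by
  rw [lexRank, seg_finset d a b c h, Set.ncard_coe_finset]
  rw [Finset.card_biUnion]
  · have hc : ∀ a' ∈ Finset.range (a+1),
        ((Finset.range (if a' = a then b else d + 1 - a')).image
          (fun b' => (a', b', d - a' - b'))).card
        = if a' = a then b else d + 1 - a' := by
      intro a' _
      rw [Finset.card_image_of_injective _ (fun u v huv =>
        (by simpa [Prod.ext_iff] using huv : u = v ∧ _).1), Finset.card_range]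
    rw [Finset.sum_congr rfl hc, Finset.sum_range_succ, if_pos rfl]
    rw [Finset.sum_congr rfl (fun j hj => if_neg (by simp at hj; omega))]
    exact add_comm _ _
  · intro x hx y hy hxy
    simp only [Finset.disjoint_left, Finset.mem_image, Finset.mem_range]
    rintro ⟨mx, my, mz⟩ ⟨b1, _, h1⟩ ⟨b2, _, h2⟩
    apply hxy
    have e1 : x = mx := (Prod.ext_iff.1 h1).1
    have e2 : y = mx := (Prod.ext_iff.1 h2).1
    omega
lemma gauss (d a : ℕ) (ha : a ≤ d + 1) :
    2 * ∑ j ∈ Finset.range a, (d + 1 - j) = a * (2 * d + 3 - a) := by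
  induction a with
  | zero => simp
  | succ n ih =>
    rw [Finset.sum_range_succ, Nat.mul_add, ih (by omega)]
    zify [show n ≤ 2 * d + 3 by omega, show n ≤ d + 1 by omega,
      show n + 1 ≤ 2 * d + 3 by omega]
    ring

lemma lexRank_lt (d : ℕ) (m m' : ℕ × ℕ × ℕ) (hm : m ∈ MonDeg d) (hm' : m' ∈ MonDeg d)
    (h : LexLt m m') : lexRank d m < lexRank d m' := by
  obtain ⟨a, b, c⟩ := m; obtain ⟨a', b', c'⟩ := m'
  simp only [MonDeg, Set.mem_setOf_eq] at hm hm'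
  rw [lexRank_eq d a b c hm, lexRank_eq d a' b' c' hm']
  rcases h with h1 | ⟨h1, h2⟩
  · have hS : ∑ j ∈ Finset.range (a+1), (d+1-j) ≤ ∑ j ∈ Finset.range a', (d+1-j) := by
      apply Finset.sum_le_sum_of_subset
      rw [Finset.range_subset_range]; omega
    rw [Finset.sum_range_succ] at hS
    set S1 := ∑ j ∈ Finset.range a, (d+1-j) with hS1
    set S2 := ∑ j ∈ Finset.range a', (d+1-j) with hS2
    simp only at h1
    omega
  · simp only at h1 h2
    subst h1
    omega


/-- Lemma on lex segments: for `d ≥ 1`, `1 ≤ i ≤ (d² + d)/2` and `κ` the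
(unique) integer with `1 ≤ κ ≤ d` and `(κ-1)d - (κ-1)(κ-2)/2 < i ≤ κd - κ(κ-1)/2`,
the lex-smallest element of the degree-`d` lex segment of colength `d + i`
(i.e. the `(d+i+1)`-th lex-smallest degree-`d` monomial) is
`x₁^κ x₂^{i-(κ-1)d+(κ-1)(κ-2)/2-1} x₃^{κd-κ(κ-1)/2-i}`. -/
theorem stmt5 (d i κ b c : ℕ) (hd : 1 ≤ d) (hi : 1 ≤ i)
    (hi2 : 2 * i ≤ d ^ 2 + d)
    (hκ1 : 1 ≤ κ) (hκd : κ ≤ d)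
    (hlow : ((κ : ℤ) - 1) * d - ((κ : ℤ) - 1) * ((κ : ℤ) - 2) / 2 < (i : ℤ))
    (hup : (i : ℤ) ≤ (κ : ℤ) * d - (κ : ℤ) * ((κ : ℤ) - 1) / 2)
    (hb : (b : ℤ) = (i : ℤ) - ((κ : ℤ) - 1) * d + ((κ : ℤ) - 1) * ((κ : ℤ) - 2) / 2 - 1)
    (hc : (c : ℤ) = (κ : ℤ) * d - (κ : ℤ) * ((κ : ℤ) - 1) / 2 - (i : ℤ)) :
    (κ, b, c) ∈ LexSeg d (d + i) ∧
      (∀ m ∈ LexSeg d (d + i), ¬ LexLt m (κ, b, c)) ∧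
      lexRank d (κ, b, c) = d + i := by
  obtain ⟨p, hp⟩ : (2:ℤ) ∣ ((κ : ℤ) - 1) * ((κ : ℤ) - 2) := by
    have := Int.even_mul_succ_self ((κ : ℤ) - 2)
    have h2 : ((κ : ℤ) - 2) * ((κ : ℤ) - 2 + 1) = ((κ : ℤ) - 1) * ((κ : ℤ) - 2) := by ring
    rw [h2] at this
    exact this.two_dvd
  obtain ⟨q, hq⟩ : (2:ℤ) ∣ (κ : ℤ) * ((κ : ℤ) - 1) := by
    have := Int.even_mul_succ_self ((κ : ℤ) - 1)
    have h2 : ((κ : ℤ) - 1) * ((κ : ℤ) - 1 + 1) = (κ : ℤ) * ((κ : ℤ) - 1) := by ring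
    rw [h2] at this
    exact this.two_dvd
  have e1 : ((κ : ℤ) - 1) * ((κ : ℤ) - 2) / 2 = p := by
    rw [hp]; exact Int.mul_ediv_cancel_left p two_ne_zero
  have e2 : (κ : ℤ) * ((κ : ℤ) - 1) / 2 = q := by
    rw [hq]; exact Int.mul_ediv_cancel_left q two_ne_zero
  rw [e1] at hb
  rw [e2] at hc
  have hdeg : κ + b + c = d := by
    have h2 : 2 * (((κ : ℤ)) + b + c) = 2 * d := by
      linear_combination 2 * hb + 2 * hc + hq - hp
    have : ((κ : ℤ)) + b + c = d := by linarith
    exact_mod_cast this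
  have hrank : lexRank d (κ, b, c) = d + i := by
    rw [lexRank_eq d κ b c hdeg]
    have hg := gauss d κ (by omega)
    have hgZ : 2 * ((∑ j ∈ Finset.range κ, (d + 1 - j) : ℕ) : ℤ) =
        (κ : ℤ) * (2 * d + 3 - κ) := by
      zify [show κ ≤ 2 * d + 3 by omega] at hg
      exact_mod_cast hg
    have h2 : 2 * ((b : ℤ) + ((∑ j ∈ Finset.range κ, (d + 1 - j) : ℕ) : ℤ)) =
        2 * ((d : ℤ) + i) := by
      linear_combination 2 * hb + hgZ - hp
    have : ((b : ℤ) + ((∑ j ∈ Finset.range κ, (d + 1 - j) : ℕ) : ℤ)) = d + i := by linarith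
    exact_mod_cast this
  refine ⟨⟨hdeg, by omega⟩, ?_, hrank⟩
  rintro m ⟨hmdeg, hmrank⟩ hlt
  have := lexRank_lt d m (κ, b, c) hmdeg hdeg hlt
  omega
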